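/- Fix a prime p, an integer e ≥ 1, and set q = p^e. For integers a, b, the F_p[F_qˣ]-modules V_a and V_b (where λ acts by x ↦ λ^a x, respectively x ↦ λ^b x, on F_q) are isomorphic if and only if a ≡ b·p^i (mod q - 1) for some integer i. -/

import Mathlib

open Polynomial


-- classification of algebra automorphisms of a finite field
lemma aux_frob_class (p e : ℕ) [Fact p.Prime] (he : 1 ≤ e)
    (F : Type*) [Field F] [Fintype F] [CharP F p] [Algebra (ZMod p) F]
    (hF : Fintype.card F = p ^ e) (σ : F ≃ₐ[ZMod p] F) :
    ∃ k : ℕ, ∀ x : F, σ x = x ^ p ^ k := by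
  have hp := (Fact.out : p.Prime)
  haveI : FiniteDimensional (ZMod p) F := Module.Finite.of_finite
  -- the Frobenius as an algebra equiv
  have hcomm : ∀ c : ZMod p, frobenius F p (algebraMap (ZMod p) F c) = algebraMap (ZMod p) F c := by
    intro c
    rw [frobenius_def, ← map_pow, ZMod.pow_card]
  let frh : F →ₐ[ZMod p] F := { (frobenius F p) with commutes' := hcomm }
  have hbij : Function.Bijective frh :=
    (Finite.injective_iff_bijective).1 (frobenius F p).injective
  let fr : F ≃ₐ[ZMod p] F := AlgEquiv.ofBijective frh hbij
  have hfr1 : ∀ x : F, fr x = x ^ p := fun x => rfl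
  have hfr : ∀ (k : ℕ) (x : F), (fr ^ k) x = x ^ p ^ k := by
    intro k
    induction k with
    | zero => intro x; simp
    | succ k ih =>
      intro x
      rw [pow_succ', AlgEquiv.mul_apply, hfr1, ih, ← pow_mul, ← pow_succ]
  -- fr has order e
  have hfre : fr ^ e = 1 := by
    ext x
    rw [hfr, ← hF, FiniteField.pow_card]
    rfl
  have hord : orderOf fr = e := by
    have hdvd : orderOf fr ∣ e := orderOf_dvd_of_pow_eq_one hfre
    have hpos : 0 < orderOf fr := by
      exact orderOf_pos fr
    set d := orderOf fr with hd
    have hled : e ≤ d := by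
      have hall : ∀ u : Fˣ, u ^ (p ^ d - 1) = 1 := by
        intro u
        have hx : ((u : F)) ^ p ^ d = (u : F) := by
          rw [← hfr d, pow_orderOf_eq_one fr]; rfl
        have hu : u ^ p ^ d = u := Units.ext (by rwa [Units.val_pow_eq_pow_val])
        have hpd : 1 ≤ p ^ d := Nat.one_le_pow _ _ hp.pos
        have h2 : u ^ (p ^ d - 1) * u = 1 * u := by
          rw [← pow_succ, Nat.sub_add_cancel hpd, hu, one_mul]
        exact mul_right_cancel h2
      have hdvd2 := (FiniteField.forall_pow_eq_one_iff F (p ^ d - 1)).1 hall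
      rw [hF] at hdvd2
      have h1 : 0 < p ^ d - 1 := by
        have : 2 ≤ p ^ d := le_trans hp.two_le (Nat.le_self_pow hpos.ne' p)
        omega
      have hle := Nat.le_of_dvd h1 hdvd2
      have : p ^ e ≤ p ^ d := by
        have h2 : 1 ≤ p ^ e := Nat.one_le_pow _ _ hp.pos
        omega
      exact (Nat.pow_le_pow_iff_right hp.one_lt).1 this
    exact le_antisymm (Nat.le_of_dvd (lt_of_lt_of_le (Nat.lt_of_lt_of_le Nat.zero_lt_one he) le_rfl) hdvd) hled
  -- card of the automorphism group is e
  have hfinrank : Module.finrank (ZMod p) F = e := by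
    have := Module.card_fintype (Module.finBasis (ZMod p) F)
    rw [ZMod.card, hF, Fintype.card_fin] at this
    exact (Nat.pow_right_injective hp.two_le this).symm
  have hcard : Nat.card (F ≃ₐ[ZMod p] F) = e := by
    rw [IsGalois.card_aut_eq_finrank, hfinrank]
  have htop : Subgroup.zpowers fr = ⊤ := by
    apply Subgroup.eq_top_of_card_eq
    rw [Nat.card_zpowers, hord, hcard]
  have hmem : σ ∈ Submonoid.powers fr := by
    rw [mem_powers_iff_mem_zpowers, htop]
    trivial
  obtain ⟨k, hk⟩ := hmem
  exact ⟨k, fun x => by rw [← hk, hfr]⟩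

theorem test_fwd (p e : ℕ) (hp : p.Prime) (he : 1 ≤ e)
    (F : Type*) [Field F] [Fintype F] (hF : Fintype.card F = p ^ e) (a b : ℤ)
    (H : ∃ φ : F ≃+ F, ∀ (u : Fˣ) (x : F),
        φ (((u ^ a : Fˣ) : F) * x) = ((u ^ b : Fˣ) : F) * φ x) :
      ∃ (i : ℤ) (pu : (ZMod (p ^ e - 1))ˣ), (pu : ZMod (p ^ e - 1)) = (p : ZMod (p ^ e - 1)) ∧
        (a : ZMod (p ^ e - 1)) = (b : ZMod (p ^ e - 1)) * ((pu ^ i : (ZMod (p ^ e - 1))ˣ) : ZMod (p ^ e - 1)) := by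
  haveI : Fact p.Prime := ⟨hp⟩
  haveI : DecidableEq F := Classical.decEq F
  -- characteristic
  haveI hch : CharP F p := by
    obtain ⟨r, hr⟩ := CharP.exists F
    haveI := hr
    have hrp : r.Prime := CharP.char_is_prime F r
    obtain ⟨m, _, hcard⟩ := FiniteField.card F r
    rw [hF] at hcard
    have : p ∣ r ^ (m : ℕ) := hcard ▸ dvd_pow_self p (by omega : e ≠ 0)
    have hpr : p = r := ((Nat.prime_dvd_prime_iff_eq hp hrp).1 (hp.dvd_of_dvd_pow this))
    subst hpr; exact hr
  letI : Algebra (ZMod p) F := ZMod.algebra F p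
  haveI : FiniteDimensional (ZMod p) F := Module.Finite.of_finite
  obtain ⟨φ, hφ⟩ := H
  obtain ⟨g, hg⟩ := IsCyclic.exists_generator (α := Fˣ)
  have hordg : orderOf g = p ^ e - 1 := by
    rw [orderOf_eq_card_of_forall_mem_zpowers hg, Nat.card_eq_fintype_card, Fintype.card_units, hF]
  set αu : Fˣ := g ^ a with hαu
  set βu : Fˣ := g ^ b with hβu
  set α : F := (αu : F) with hα
  set β : F := (βu : F) with hβ
  -- powers commute through φ
  have step1 : ∀ (m : ℕ) (x : F), φ (α ^ m * x) = β ^ m * φ x := by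
    intro m x
    have := hφ (g ^ m) x
    simp only [← zpow_natCast g m, ← zpow_mul] at this
    rw [mul_comm (m:ℤ) a, mul_comm (m:ℤ) b] at this
    simp only [zpow_mul, zpow_natCast] at this
    simpa [hα, hβ, hαu, hβu, Units.val_pow_eq_pow_val] using this
  -- polynomials commute through φ
  have step2 : ∀ (f : (ZMod p)[X]) (x : F), φ (aeval α f * x) = aeval β f * φ x := by
    intro f
    induction f using Polynomial.induction_on' with
    | add f1 f2 h1 h2 =>
      intro x
      simp only [map_add, add_mul, map_add φ, h1, h2]
    | monomial m c =>
      intro x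
      rw [aeval_monomial, aeval_monomial]
      have hc : algebraMap (ZMod p) F c = ((c.val : ℕ) : F) := by
        rw [← map_natCast (algebraMap (ZMod p) F) c.val, ZMod.natCast_val, ZMod.cast_id]
      rw [hc, mul_assoc, ← nsmul_eq_mul, map_nsmul, step1, nsmul_eq_mul, mul_assoc]
  -- β is a root of the minimal polynomial of α
  have hint : IsIntegral (ZMod p) α := IsIntegral.of_finite (ZMod p) α
  have step4 : aeval β (minpoly (ZMod p) α) = 0 := by
    have := step2 (minpoly (ZMod p) α) (φ.symm 1)
    rw [minpoly.aeval, zero_mul, map_zero, AddEquiv.apply_symm_apply, mul_one] at this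
    exact this.symm
  have hconj : IsConjRoot (ZMod p) α β := isConjRoot_of_aeval_eq_zero hint step4
  obtain ⟨σ, hσ⟩ := hconj.symm.exists_algEquiv
  obtain ⟨k, hk⟩ := aux_frob_class p e he F hF σ
  have hβα : β = α ^ p ^ k := by rw [← hσ, hk]
  -- back to units
  have huβα : βu = αu ^ p ^ k := Units.ext (by rw [Units.val_pow_eq_pow_val, ← hβα])
  have hgg : g ^ b = g ^ (a * (p ^ k : ℕ) : ℤ) := by
    rw [zpow_mul, ← hαu, zpow_natCast, ← huβα, hβu]
  have hdvd3 : ((p ^ e - 1 : ℕ) : ℤ) ∣ b - a * (p : ℤ) ^ k := by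
    have h1 : g ^ (b - a * (p ^ k : ℕ) : ℤ) = 1 := by
      rw [zpow_sub, hgg]
      exact mul_inv_cancel _
    have h2 := zpow_eq_one_iff_modEq.1 h1
    rw [hordg] at h2
    have h3 := (Int.modEq_zero_iff_dvd).1 h2
    push_cast at h3 ⊢
    exact h3
  -- construct the unit
  have hpe1 : ((p : ZMod (p ^ e - 1)))^e = 1 := by
    have h0 : ((p ^ e - 1 : ℕ) : ZMod (p ^ e - 1)) = 0 := ZMod.natCast_self _
    have h3 : p ^ e = (p ^ e - 1) + 1 := by
      have : 1 ≤ p ^ e := Nat.one_le_pow _ _ hp.pos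
      omega
    have h2 : (p : ZMod (p ^ e - 1)) ^ e = ((p ^ e : ℕ) : ZMod (p ^ e - 1)) := by push_cast; ring
    rw [h2, h3]
    push_cast [h0]
    ring
  have hmul : (p : ZMod (p ^ e - 1)) * (p : ZMod (p ^ e - 1)) ^ (e - 1) = 1 := by
    rw [← pow_succ']
    have : e - 1 + 1 = e := by omega
    rw [this, hpe1]
  refine ⟨-(k : ℤ), Units.mkOfMulEqOne _ _ hmul, rfl, ?_⟩
  have hcast : (b : ZMod (p ^ e - 1)) = (a : ZMod (p ^ e - 1)) * (p : ZMod (p ^ e - 1)) ^ k := by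
    have h4 := (ZMod.intCast_zmod_eq_zero_iff_dvd _ _).2 hdvd3
    push_cast at h4
    rw [sub_eq_zero] at h4
    exact h4
  set pu : (ZMod (p ^ e - 1))ˣ := Units.mkOfMulEqOne _ _ hmul with hpu
  have hpuval : (pu : ZMod (p ^ e - 1)) = (p : ZMod (p ^ e - 1)) := rfl
  calc (a : ZMod (p ^ e - 1))
      = (a : ZMod (p ^ e - 1)) * ((pu ^ (k : ℤ) * pu ^ (-(k:ℤ)) : (ZMod (p ^ e - 1))ˣ) : ZMod (p ^ e - 1)) := by
        rw [← zpow_add, add_neg_cancel, zpow_zero, Units.val_one, mul_one]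
    _ = (b : ZMod (p ^ e - 1)) * ((pu ^ (-(k:ℤ)) : (ZMod (p ^ e - 1))ˣ) : ZMod (p ^ e - 1)) := by
        rw [Units.val_mul, ← mul_assoc, zpow_natCast, Units.val_pow_eq_pow_val, hpuval, ← hcast]


theorem test_bwd (p e : ℕ) (hp : p.Prime) (he : 1 ≤ e)
    (F : Type*) [Field F] [Fintype F] (hF : Fintype.card F = p ^ e) (a b : ℤ)
    (H : ∃ (i : ℤ) (pu : (ZMod (p ^ e - 1))ˣ), (pu : ZMod (p ^ e - 1)) = (p : ZMod (p ^ e - 1)) ∧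
        (a : ZMod (p ^ e - 1)) = (b : ZMod (p ^ e - 1)) * ((pu ^ i : (ZMod (p ^ e - 1))ˣ) : ZMod (p ^ e - 1))) :
    (∃ φ : F ≃+ F, ∀ (u : Fˣ) (x : F),
        φ (((u ^ a : Fˣ) : F) * x) = ((u ^ b : Fˣ) : F) * φ x) := by
  haveI : Fact p.Prime := ⟨hp⟩
  haveI : DecidableEq F := Classical.decEq F
  haveI hch : CharP F p := by
    obtain ⟨r, hr⟩ := CharP.exists F
    haveI := hr
    have hrp : r.Prime := CharP.char_is_prime F r
    obtain ⟨m, _, hcard⟩ := FiniteField.card F r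
    rw [hF] at hcard
    have : p ∣ r ^ (m : ℕ) := hcard ▸ dvd_pow_self p (by omega : e ≠ 0)
    have hpr : p = r := ((Nat.prime_dvd_prime_iff_eq hp hrp).1 (hp.dvd_of_dvd_pow this))
    subst hpr; exact hr
  obtain ⟨i, pu, hpuval, hab⟩ := H
  have hpe1 : ((p : ZMod (p ^ e - 1)))^e = 1 := by
    have h0 : ((p ^ e - 1 : ℕ) : ZMod (p ^ e - 1)) = 0 := ZMod.natCast_self _
    have h3 : p ^ e = (p ^ e - 1) + 1 := by
      have : 1 ≤ p ^ e := Nat.one_le_pow _ _ hp.pos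
      omega
    have h2 : (p : ZMod (p ^ e - 1)) ^ e = ((p ^ e : ℕ) : ZMod (p ^ e - 1)) := by push_cast; ring
    rw [h2, h3]
    push_cast [h0]
    ring
  have hpue : pu ^ e = 1 := Units.ext (by
    rw [Units.val_pow_eq_pow_val, hpuval, hpe1, Units.val_one])
  -- reduce the exponent i to a natural number j < e
  have he' : (0:ℤ) < (e:ℤ) := by exact_mod_cast Nat.lt_of_lt_of_le Nat.zero_lt_one he
  set j : ℕ := (i % (e : ℤ)).toNat with hj
  have hie : (0:ℤ) ≤ i % (e : ℤ) := Int.emod_nonneg i he'.ne'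
  have hjlt : j < e := by
    have := Int.emod_lt_of_pos i he'
    omega
  have hpuij : pu ^ i = pu ^ j := by
    conv_lhs => rw [show i = (e : ℤ) * (i / e) + i % e from (Int.mul_ediv_add_emod i e).symm]
    rw [zpow_add, zpow_mul, zpow_natCast, hpue, one_zpow, one_mul, ← zpow_natCast]
    congr 1
    omega
  -- the congruence a * p ^ (e - j) ≡ b mod (p^e - 1)
  have hcast : ((a * (p:ℤ) ^ (e - j) : ℤ) : ZMod (p ^ e - 1)) = ((b : ℤ) : ZMod (p ^ e - 1)) := by
    push_cast
    rw [hab, hpuij, Units.val_pow_eq_pow_val, hpuval]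
    rw [mul_assoc, ← pow_add]
    have : j + (e - j) = e := by omega
    rw [this, hpe1, mul_one]
  have hdvd : ((p ^ e - 1 : ℕ) : ℤ) ∣ a * (p:ℤ) ^ (e - j) - b := by
    have := (ZMod.intCast_zmod_eq_zero_iff_dvd (a * (p:ℤ) ^ (e - j) - b) (p ^ e - 1)).2
    apply (ZMod.intCast_zmod_eq_zero_iff_dvd _ _).1
    push_cast
    rw [sub_eq_zero]
    exact_mod_cast hcast
  -- build φ as the (e-j)-th Frobenius power
  set k : ℕ := e - j with hk
  let f : F →+* F := iterateFrobenius F p k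
  have hbij : Function.Bijective f := Finite.injective_iff_bijective.1 f.injective
  refine ⟨AddEquiv.ofBijective (f : F →+ F) hbij, ?_⟩
  intro u x
  have happ : ∀ y : F, AddEquiv.ofBijective (f : F →+ F) hbij y = y ^ p ^ k := fun y =>
    iterateFrobenius_def p k y
  rw [happ, happ, mul_pow]
  congr 1
  rw [← Units.val_pow_eq_pow_val, ← zpow_natCast (u ^ a), ← zpow_mul]
  congr 1
  -- u ^ (a * p^k) = u ^ b
  have hordu : (orderOf u : ℤ) ∣ a * (p:ℤ) ^ k - b := by
    refine dvd_trans ?_ hdvd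
    have h1 : orderOf u ∣ p ^ e - 1 := by
      have := orderOf_dvd_card (x := u)
      rwa [Fintype.card_units, hF] at this
    exact_mod_cast Int.natCast_dvd_natCast.2 h1
  have : u ^ (a * (p:ℤ) ^ k - b) = 1 := by
    rw [zpow_eq_one_iff_modEq]
    exact (Int.modEq_zero_iff_dvd).2 hordu
  have h2 : u ^ (a * (p:ℤ)^k) = u ^ b := by
    rw [zpow_sub] at this
    exact div_eq_one.1 this
  rw [← h2]
  congr 1

/-- Let `q = p^e`.  For integers `a, b`, the `F_p[F_qˣ]`-modules `V_a` and `V_b` (with the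
action `λ·x = λ^a x`, resp. `λ^b x`, on `F_q`) are isomorphic if and only if
`a ≡ b·p^i (mod q - 1)` for some integer `i` (where `p` is invertible mod `q - 1`). -/
theorem stmt_7 (p e : ℕ) (hp : p.Prime) (he : 1 ≤ e)
    (F : Type*) [Field F] [Fintype F] (hF : Fintype.card F = p ^ e) (a b : ℤ) :
    (∃ φ : F ≃+ F, ∀ (u : Fˣ) (x : F),
        φ (((u ^ a : Fˣ) : F) * x) = ((u ^ b : Fˣ) : F) * φ x) ↔
      ∃ (i : ℤ) (pu : (ZMod (p ^ e - 1))ˣ), (pu : ZMod (p ^ e - 1)) = (p : ZMod (p ^ e - 1)) ∧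
        (a : ZMod (p ^ e - 1)) = (b : ZMod (p ^ e - 1)) * ((pu ^ i : (ZMod (p ^ e - 1))ˣ) : ZMod (p ^ e - 1)) := by
  exact ⟨test_fwd p e hp he F hF a b, test_bwd p e hp he F hF a b⟩
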